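/- For a real symmetric positive definite n×n matrix X, a real number c, and a symmetric direction Δ, the Fréchet derivative of X ↦ tr(X^c) at X in direction Δ equals c·tr(X^(c−1)·Δ). -/

import Mathlib

open Filter Topology Matrix

/-- Matrix power of a Hermitian (symmetric) real matrix via spectral decomposition. -/
noncomputable def mpow {m : ℕ} (A : Matrix (Fin m) (Fin m) ℝ) (c : ℝ) :
    Matrix (Fin m) (Fin m) ℝ :=
  if hA : A.IsHermitian then
    (hA.eigenvectorUnitary : Matrix (Fin m) (Fin m) ℝ) *
      Matrix.diagonal (fun i => hA.eigenvalues i ^ c) *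
      star (hA.eigenvectorUnitary : Matrix (Fin m) (Fin m) ℝ)
  else 0

/-- Matrix logarithm of a Hermitian (symmetric) real matrix via spectral decomposition. -/
noncomputable def mlog {m : ℕ} (A : Matrix (Fin m) (Fin m) ℝ) :
    Matrix (Fin m) (Fin m) ℝ :=
  if hA : A.IsHermitian then
    (hA.eigenvectorUnitary : Matrix (Fin m) (Fin m) ℝ) *
      Matrix.diagonal (fun i => Real.log (hA.eigenvalues i)) *
      star (hA.eigenvectorUnitary : Matrix (Fin m) (Fin m) ℝ)
  else 0


open Polynomial Finset
attribute [local instance] Matrix.linftyOpNormedRing Matrix.linftyOpNormedAlgebra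
variable {m : ℕ}


variable {m : ℕ}

lemma herm_add_smul {X Δ : Matrix (Fin m) (Fin m) ℝ} (hX : X.IsHermitian)
    (hΔ : Δ.IsHermitian) (t : ℝ) : (X + t • Δ).IsHermitian := by
  unfold Matrix.IsHermitian at *
  simp only [conjTranspose_add, conjTranspose_smul, star_trivial, hX, hΔ]

lemma spec_thm {A : Matrix (Fin m) (Fin m) ℝ} (hA : A.IsHermitian) :
    A = (hA.eigenvectorUnitary : Matrix (Fin m) (Fin m) ℝ) * diagonal hA.eigenvalues *
      star (hA.eigenvectorUnitary : Matrix (Fin m) (Fin m) ℝ) := by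
  simpa using hA.spectral_theorem

lemma star_mul_self_eigU {A : Matrix (Fin m) (Fin m) ℝ} (hA : A.IsHermitian) :
    star (hA.eigenvectorUnitary : Matrix (Fin m) (Fin m) ℝ) *
      (hA.eigenvectorUnitary : Matrix (Fin m) (Fin m) ℝ) = 1 :=
  Unitary.coe_star_mul_self _

lemma mul_star_self_eigU {A : Matrix (Fin m) (Fin m) ℝ} (hA : A.IsHermitian) :
    (hA.eigenvectorUnitary : Matrix (Fin m) (Fin m) ℝ) *
      star (hA.eigenvectorUnitary : Matrix (Fin m) (Fin m) ℝ) = 1 :=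
  Unitary.coe_mul_star_self _

lemma trace_mul_diagonal' (N : Matrix (Fin m) (Fin m) ℝ) (d : Fin m → ℝ) :
    (N * diagonal d).trace = ∑ i, d i * N i i := by
  simp [Matrix.trace, Matrix.diag, Matrix.mul_diagonal, mul_comm]

lemma trace_conj_diag_mul {A : Matrix (Fin m) (Fin m) ℝ} (hA : A.IsHermitian)
    (d : Fin m → ℝ) (M : Matrix (Fin m) (Fin m) ℝ) :
    ((hA.eigenvectorUnitary : Matrix (Fin m) (Fin m) ℝ) * diagonal d *
      star (hA.eigenvectorUnitary : Matrix (Fin m) (Fin m) ℝ) * M).trace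
    = ∑ i, d i * (star (hA.eigenvectorUnitary : Matrix (Fin m) (Fin m) ℝ) * M *
        (hA.eigenvectorUnitary : Matrix (Fin m) (Fin m) ℝ)) i i := by
  set U := (hA.eigenvectorUnitary : Matrix (Fin m) (Fin m) ℝ)
  rw [Matrix.mul_assoc (U * diagonal d), Matrix.trace_mul_cycle, trace_mul_diagonal']

lemma trace_conj_diag {A : Matrix (Fin m) (Fin m) ℝ} (hA : A.IsHermitian)
    (d : Fin m → ℝ) :
    ((hA.eigenvectorUnitary : Matrix (Fin m) (Fin m) ℝ) * diagonal d *
      star (hA.eigenvectorUnitary : Matrix (Fin m) (Fin m) ℝ)).trace = ∑ i, d i := by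
  rw [Matrix.mul_assoc, Matrix.trace_mul_comm, Matrix.mul_assoc,
    star_mul_self_eigU hA, Matrix.mul_one]
  simp [Matrix.trace, Matrix.diag]

-- powers via spectral decomposition
lemma pow_spec {A : Matrix (Fin m) (Fin m) ℝ} (hA : A.IsHermitian) (k : ℕ) :
    A ^ k = (hA.eigenvectorUnitary : Matrix (Fin m) (Fin m) ℝ) *
      diagonal (fun i => hA.eigenvalues i ^ k) *
      star (hA.eigenvectorUnitary : Matrix (Fin m) (Fin m) ℝ) := by
  set U := (hA.eigenvectorUnitary : Matrix (Fin m) (Fin m) ℝ) with hU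
  induction k with
  | zero =>
    simp [Matrix.diagonal_one]
    exact (mul_star_self_eigU hA).symm
  | succ k ih =>
    rw [pow_succ, ih]
    have h1 : U * diagonal (fun i => hA.eigenvalues i ^ k) * star U * A
        = U * diagonal (fun i => hA.eigenvalues i ^ k) * star U *
          (U * diagonal hA.eigenvalues * star U) := by rw [← spec_thm hA]
    rw [h1, show U * diagonal (fun i => hA.eigenvalues i ^ k) * star U *
        (U * diagonal hA.eigenvalues * star U)
      = U * (diagonal (fun i => hA.eigenvalues i ^ k) * (star U * U) *
        (diagonal hA.eigenvalues)) * star U by simp [Matrix.mul_assoc]]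
    rw [star_mul_self_eigU hA, Matrix.mul_one, Matrix.diagonal_mul_diagonal]
    congr 2

lemma aeval_spec {A : Matrix (Fin m) (Fin m) ℝ} (hA : A.IsHermitian) (p : ℝ[X]) :
    aeval A p = (hA.eigenvectorUnitary : Matrix (Fin m) (Fin m) ℝ) *
      diagonal (fun i => p.eval (hA.eigenvalues i)) *
      star (hA.eigenvectorUnitary : Matrix (Fin m) (Fin m) ℝ) := by
  set U := (hA.eigenvectorUnitary : Matrix (Fin m) (Fin m) ℝ) with hU
  induction p using Polynomial.induction_on' with
  | add p q hp hq =>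
    have hd : (fun i => eval (hA.eigenvalues i) (p + q))
        = fun i => eval (hA.eigenvalues i) p + eval (hA.eigenvalues i) q := by
      funext i; simp
    rw [map_add, hp, hq, hd, ← Matrix.diagonal_add, Matrix.mul_add, Matrix.add_mul]
  | monomial k a =>
    rw [aeval_monomial]
    have h0 : (algebraMap ℝ (Matrix (Fin m) (Fin m) ℝ)) a * A ^ k = a • A ^ k := by
      rw [Algebra.algebraMap_eq_smul_one, smul_mul_assoc, Matrix.one_mul]
    have hd : (fun i => eval (hA.eigenvalues i) ((monomial k) a))
        = a • fun i => hA.eigenvalues i ^ k := by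
      funext i; simp [eval_monomial]
    rw [h0, pow_spec hA k, hd, Matrix.diagonal_smul, Matrix.mul_smul, Matrix.smul_mul]

-- entry formula for conjugated diagonal
lemma conj_diag_entry (P : Matrix (Fin m) (Fin m) ℝ) (d : Fin m → ℝ) (i : Fin m) :
    (star P * diagonal d * P) i i = ∑ k, d k * (P k i) ^ 2 := by
  rw [Matrix.mul_apply]
  congr 1
  funext l
  rw [Matrix.mul_diagonal, Matrix.star_apply]
  simp [sq]
  ring

-- column of a matrix with star P * P = 1 has unit entries
lemma entry_bound {P : Matrix (Fin m) (Fin m) ℝ} (hP : star P * P = 1)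
    (k i : Fin m) : |P k i| ≤ 1 := by
  have h1 : (star P * P) i i = ∑ j, (P j i) ^ 2 := by
    rw [Matrix.mul_apply]
    congr 1
    funext j
    rw [Matrix.star_apply]
    simp [sq, mul_comm]
  rw [hP] at h1
  have h2 : (P k i) ^ 2 ≤ ∑ j, (P j i) ^ 2 :=
    Finset.single_le_sum (f := fun j => (P j i) ^ 2) (fun j _ => sq_nonneg _)
      (Finset.mem_univ k)
  have : (P k i) ^ 2 ≤ 1 := by
    rw [← h1] at h2
    simpa using h2
  exact (sq_le_one_iff_abs_le_one _).mp this

lemma quad_bound {P : Matrix (Fin m) (Fin m) ℝ} (hP : star P * P = 1)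
    (M : Matrix (Fin m) (Fin m) ℝ) (i : Fin m) :
    |(star P * M * P) i i| ≤ ∑ j, ∑ l, |M j l| := by
  have he : (star P * M * P) i i = ∑ l, ∑ j, P j i * M j l * P l i := by
    simp [Matrix.mul_apply, Matrix.star_apply, Finset.sum_mul]
  rw [he]
  calc |∑ l, ∑ j, P j i * M j l * P l i| ≤ ∑ l, ∑ j, |P j i * M j l * P l i| := by
        refine (Finset.abs_sum_le_sum_abs _ _).trans ?_
        exact Finset.sum_le_sum fun l _ => Finset.abs_sum_le_sum_abs _ _
    _ ≤ ∑ l, ∑ j, |M j l| := by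
        refine Finset.sum_le_sum fun l _ => Finset.sum_le_sum fun j _ => ?_
        rw [abs_mul, abs_mul]
        calc |P j i| * |M j l| * |P l i| ≤ 1 * |M j l| * 1 := by
              apply mul_le_mul (mul_le_mul (entry_bound hP j i) le_rfl (abs_nonneg _)
                zero_le_one) (entry_bound hP l i) (abs_nonneg _)
              positivity
          _ = |M j l| := by ring
    _ = ∑ j, ∑ l, |M j l| := Finset.sum_comm

lemma col_sq_sum {P : Matrix (Fin m) (Fin m) ℝ} (hP : star P * P = 1) (i : Fin m) :
    ∑ j, (P j i) ^ 2 = 1 := by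
  have h1 : (star P * P) i i = ∑ j, (P j i) ^ 2 := by
    rw [Matrix.mul_apply]
    congr 1
    funext j
    rw [Matrix.star_apply]
    simp [sq, mul_comm]
  rw [hP] at h1
  simp at h1
  exact h1.symm

lemma quad_sandwich {X : Matrix (Fin m) (Fin m) ℝ} (hX : X.IsHermitian)
    {P : Matrix (Fin m) (Fin m) ℝ} (hP : star P * P = 1)
    {lo hi : ℝ} (hlo : ∀ k, lo ≤ hX.eigenvalues k) (hhi : ∀ k, hX.eigenvalues k ≤ hi)
    (i : Fin m) :
    lo ≤ (star P * X * P) i i ∧ (star P * X * P) i i ≤ hi := by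
  set V := (hX.eigenvectorUnitary : Matrix (Fin m) (Fin m) ℝ)
  set W := star V * P with hW
  have hWu : star W * W = 1 := by
    rw [hW, StarMul.star_mul, star_star, Matrix.mul_assoc, ← Matrix.mul_assoc V,
      mul_star_self_eigU hX, Matrix.one_mul, hP]
  have hXc : star P * X * P = star W * diagonal hX.eigenvalues * W := by
    rw [hW, StarMul.star_mul, star_star]
    nth_rewrite 1 [show X = V * diagonal hX.eigenvalues * star V by simpa using hX.spectral_theorem]
    simp [Matrix.mul_assoc]
  have hent := conj_diag_entry W hX.eigenvalues i
  have hsum := col_sq_sum hWu i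
  rw [hXc, hent]
  constructor
  · calc lo = ∑ k, lo * (W k i) ^ 2 := by rw [← Finset.mul_sum, hsum, mul_one]
      _ ≤ ∑ k, hX.eigenvalues k * (W k i) ^ 2 :=
        Finset.sum_le_sum fun k _ => mul_le_mul_of_nonneg_right (hlo k) (sq_nonneg _)
  · calc ∑ k, hX.eigenvalues k * (W k i) ^ 2 ≤ ∑ k, hi * (W k i) ^ 2 :=
        Finset.sum_le_sum fun k _ => mul_le_mul_of_nonneg_right (hhi k) (sq_nonneg _)
      _ = hi := by rw [← Finset.mul_sum, hsum, mul_one]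

lemma eig_diag {A : Matrix (Fin m) (Fin m) ℝ} (hA : A.IsHermitian) (i : Fin m) :
    hA.eigenvalues i = (star (hA.eigenvectorUnitary : Matrix (Fin m) (Fin m) ℝ) * A *
      (hA.eigenvectorUnitary : Matrix (Fin m) (Fin m) ℝ)) i i := by
  have h := hA.conjStarAlgAut_star_eigenvectorUnitary
  rw [show star (hA.eigenvectorUnitary : Matrix (Fin m) (Fin m) ℝ) * A *
      (hA.eigenvectorUnitary : Matrix (Fin m) (Fin m) ℝ) = diagonal hA.eigenvalues by simpa using h]
  simp

attribute [local instance] Matrix.linftyOpNormedRing Matrix.linftyOpNormedAlgebra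
variable {m : ℕ}

noncomputable def traceCLM (m : ℕ) : Matrix (Fin m) (Fin m) ℝ →L[ℝ] ℝ :=
  LinearMap.toContinuousLinearMap (Matrix.traceLinearMap (Fin m) ℝ ℝ)

lemma hasDerivAt_line (X Δ : Matrix (Fin m) (Fin m) ℝ) (t : ℝ) :
    HasDerivAt (fun s : ℝ => X + s • Δ) Δ t := by
  have h := ((hasDerivAt_id t).smul_const Δ).const_add X
  simp only [id, one_smul] at h
  exact h

lemma hasDerivAt_pow_line (X Δ : Matrix (Fin m) (Fin m) ℝ) (k : ℕ) (t : ℝ) :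
    HasDerivAt (fun s : ℝ => (X + s • Δ) ^ (k + 1))
      (∑ j ∈ range (k + 1), (X + t • Δ) ^ j * Δ * (X + t • Δ) ^ (k - j)) t := by
  induction k with
  | zero => simpa using hasDerivAt_line X Δ t
  | succ k ih =>
    have h := ih.mul (hasDerivAt_line X Δ t)
    have : (fun s : ℝ => (X + s • Δ) ^ (k + 1) * (X + s • Δ))
        = fun s : ℝ => (X + s • Δ) ^ (k + 2) := by
      funext s; rw [← pow_succ]
    simp only [Pi.mul_def] at h
    rw [this] at h
    refine h.congr_deriv ?_
    symm
    rw [sum_range_succ]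
    congr 1
    · rw [Finset.sum_mul]
      refine Finset.sum_congr rfl fun j hj => ?_
      have hj' : k + 1 - j = (k - j) + 1 := by
        simp at hj; omega
      rw [hj', pow_succ]
      simp [Matrix.mul_assoc]
    · simp [Nat.sub_self]

lemma trace_pow_deriv (X Δ : Matrix (Fin m) (Fin m) ℝ) (k : ℕ) (t : ℝ) :
    HasDerivAt (fun s : ℝ => ((X + s • Δ) ^ (k + 1)).trace)
      ((k + 1 : ℝ) * ((X + t • Δ) ^ k * Δ).trace) t := by
  have h := (traceCLM m).hasFDerivAt.comp_hasDerivAt t (hasDerivAt_pow_line X Δ k t)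
  have e1 : ∀ s : ℝ, traceCLM m ((X + s • Δ) ^ (k + 1)) = ((X + s • Δ) ^ (k + 1)).trace :=
    fun s => rfl
  have e2 : traceCLM m (∑ j ∈ range (k + 1), (X + t • Δ) ^ j * Δ * (X + t • Δ) ^ (k - j))
      = (k + 1 : ℝ) * ((X + t • Δ) ^ k * Δ).trace := by
    show (∑ j ∈ range (k + 1), (X + t • Δ) ^ j * Δ * (X + t • Δ) ^ (k - j)).trace = _
    rw [Matrix.trace_sum]
    have : ∀ j ∈ range (k + 1),
        ((X + t • Δ) ^ j * Δ * (X + t • Δ) ^ (k - j)).trace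
          = ((X + t • Δ) ^ k * Δ).trace := by
      intro j hj
      rw [Matrix.trace_mul_cycle, ← pow_add]
      congr 3
      simp at hj; omega
    rw [Finset.sum_congr rfl this, Finset.sum_const, card_range, nsmul_eq_mul]
    push_cast
    ring
  exact h.congr_deriv e2

lemma trace_aeval_deriv (X Δ : Matrix (Fin m) (Fin m) ℝ) (p : ℝ[X]) (t : ℝ) :
    HasDerivAt (fun s : ℝ => (aeval (X + s • Δ) p).trace)
      ((aeval (X + t • Δ) (derivative p) * Δ).trace) t := by
  induction p using Polynomial.induction_on' with
  | add p q hp hq =>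
    have h := hp.add hq
    have e1 : (fun s : ℝ => (aeval (X + s • Δ) p).trace + (aeval (X + s • Δ) q).trace)
        = fun s : ℝ => (aeval (X + s • Δ) (p + q)).trace := by
      funext s; rw [map_add, Matrix.trace_add]
    simp only [Pi.add_def] at h
    rw [e1] at h
    refine h.congr_deriv ?_
    symm
    rw [map_add, map_add, Matrix.add_mul, Matrix.trace_add]
  | monomial k a =>
    rcases k with _ | k
    · have : (fun s : ℝ => (aeval (X + s • Δ) ((monomial 0) a)).trace)
          = fun _ : ℝ => a * (1 : Matrix (Fin m) (Fin m) ℝ).trace := by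
        funext s
        rw [show ((monomial 0) a : ℝ[X]) = C a from by simp, aeval_C,
          Algebra.algebraMap_eq_smul_one, Matrix.trace_smul]
        simp
      rw [this]
      simpa using hasDerivAt_const t (a * (1 : Matrix (Fin m) (Fin m) ℝ).trace)
    · have h := (trace_pow_deriv X Δ k t).const_mul a
      have e1 : (fun s : ℝ => a * ((X + s • Δ) ^ (k + 1)).trace)
          = fun s : ℝ => (aeval (X + s • Δ) ((monomial (k + 1)) a)).trace := by
        funext s
        rw [aeval_monomial, Algebra.algebraMap_eq_smul_one, smul_mul_assoc,
          Matrix.one_mul, Matrix.trace_smul]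
        simp
      rw [e1] at h
      refine h.congr_deriv ?_
      symm
      rw [derivative_monomial, aeval_monomial, Algebra.algebraMap_eq_smul_one,
        smul_mul_assoc, Matrix.one_mul, Matrix.smul_mul, Matrix.trace_smul]
      push_cast
      simp
      ring


noncomputable def antider (q : ℝ[X]) : ℝ[X] :=
  q.sum fun i a => C (a / (i + 1)) * X ^ (i + 1)

lemma derivative_antider (q : ℝ[X]) : derivative (antider q) = q := by
  unfold antider
  rw [Polynomial.sum, map_sum]
  have : ∀ i ∈ q.support,
      derivative (C (q.coeff i / (i + 1)) * X ^ (i + 1)) = C (q.coeff i) * X ^ i := by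
    intro i _
    rw [derivative_C_mul_X_pow]
    have h1 : q.coeff i / (↑i + 1) * ↑(i + 1) = q.coeff i := by
      push_cast
      field_simp
    simp only [Nat.add_sub_cancel, h1]
  rw [Finset.sum_congr rfl this]
  exact q.sum_C_mul_X_pow_eq

lemma mpow_eq {A : Matrix (Fin m) (Fin m) ℝ} (hA : A.IsHermitian) (c : ℝ) :
    mpow A c = (hA.eigenvectorUnitary : Matrix (Fin m) (Fin m) ℝ) *
      diagonal (fun i => hA.eigenvalues i ^ c) *
      star (hA.eigenvectorUnitary : Matrix (Fin m) (Fin m) ℝ) := by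
  unfold mpow
  rw [dif_pos hA]

theorem trace_mpow_deriv {n : ℕ}
    (X Δ : Matrix (Fin n) (Fin n) ℝ) (hX : X.PosDef) (hΔ : Δ.IsHermitian) (c : ℝ) :
    HasDerivAt (fun t : ℝ => (mpow (X + t • Δ) c).trace)
      (c * (mpow X (c - 1) * Δ).trace) 0 := by
  
  rcases Nat.eq_zero_or_pos n with h0 | hn
  · subst h0
    have hz : ∀ M : Matrix (Fin 0) (Fin 0) ℝ, M.trace = 0 := fun M => by
      simp [Matrix.trace]
    simpa [hz] using hasDerivAt_const (0:ℝ) (0:ℝ)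
  haveI : Nonempty (Fin n) := Fin.pos_iff_nonempty.mp hn
  have hXh : X.IsHermitian := hX.1
  have hH : ∀ t : ℝ, (X + t • Δ).IsHermitian := fun t => herm_add_smul hXh hΔ t
  obtain ⟨i0, -, hmin⟩ := Finset.exists_min_image Finset.univ hXh.eigenvalues
    ⟨Classical.arbitrary _, Finset.mem_univ _⟩
  obtain ⟨i1, -, hmax⟩ := Finset.exists_max_image Finset.univ hXh.eigenvalues
    ⟨Classical.arbitrary _, Finset.mem_univ _⟩
  set μ := hXh.eigenvalues i0 with hμdef
  set ν := hXh.eigenvalues i1 with hνdef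
  have hμ : 0 < μ := hX.eigenvalues_pos i0
  have hμν : μ ≤ ν := hmin i1 (Finset.mem_univ _)
  set K := ∑ j, ∑ l, |Δ j l| with hKdef
  have hK0 : 0 ≤ K := Finset.sum_nonneg fun j _ => Finset.sum_nonneg fun l _ => abs_nonneg _
  set δ := μ / (2 * (K + 1)) with hδdef
  have hδ : 0 < δ := by positivity
  have hδK : δ * K + δ = μ / 2 := by
    rw [hδdef]
    field_simp
  have hδK' : δ * K ≤ μ / 2 := by nlinarith
  set a := μ / 2 with hadef
  set b := ν + μ / 2 with hbdef
  have ha : 0 < a := by positivity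
  have hab : a ≤ b := by rw [hadef, hbdef]; nlinarith
  have hba : 0 ≤ b - a := by nlinarith
  -- eigenvalue containment
  have hspec : ∀ t ∈ Set.Ioo (-δ) δ, ∀ i, (hH t).eigenvalues i ∈ Set.Icc a b := by
    intro t ht i
    set U := ((hH t).eigenvectorUnitary : Matrix (Fin n) (Fin n) ℝ) with hUdef
    have hUu : star U * U = 1 := star_mul_self_eigU (hH t)
    have hsplit : (hH t).eigenvalues i
        = (star U * X * U) i i + t * (star U * Δ * U) i i := by
      rw [eig_diag (hH t) i]
      have h1 : star U * (X + t • Δ) * U = star U * X * U + t • (star U * Δ * U) := by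
        rw [Matrix.mul_add, Matrix.add_mul]
        congr 1
        rw [Matrix.mul_smul, Matrix.smul_mul]
      rw [h1]
      simp
    have hq := quad_sandwich hXh hUu (fun k => hmin k (Finset.mem_univ k))
      (fun k => hmax k (Finset.mem_univ k)) i
    have hb2 := quad_bound hUu Δ i
    have ht' : |t| ≤ δ := le_of_lt (abs_lt.mpr ⟨ht.1, ht.2⟩)
    have htw : |t * (star U * Δ * U) i i| ≤ δ * K := by
      rw [abs_mul]
      exact mul_le_mul ht' hb2 (abs_nonneg _) (le_of_lt hδ)
    have htw' := abs_le.mp htw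
    rw [Set.mem_Icc, hsplit]
    clear_value μ ν K δ a b
    constructor
    · linarith [hq.1, htw'.1, hδK', hadef, hbdef]
    · linarith [hq.2, htw'.2, hδK', hadef, hbdef]
  -- polynomial approximation of the derivative
  have hcont : ContinuousOn (fun x : ℝ => c * x ^ (c - 1)) (Set.Icc a b) := by
    apply ContinuousOn.mul continuousOn_const
    intro x hx
    exact (Real.continuousAt_rpow_const x (c-1)
      (Or.inl (ne_of_gt (lt_of_lt_of_le ha hx.1)))).continuousWithinAt
  have hqex : ∀ k : ℕ, ∃ qq : ℝ[X], ∀ x ∈ Set.Icc a b,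
      |qq.eval x - c * x ^ (c - 1)| < 1 / (k + 1) := fun k =>
    exists_polynomial_near_of_continuousOn a b _ hcont (1 / (k+1)) (by positivity)
  choose q hq using hqex
  set p : ℕ → ℝ[X] := fun k => antider (q k) + C (a ^ c - (antider (q k)).eval a) with hpdef
  have hp' : ∀ k, derivative (p k) = q k := fun k => by
    rw [hpdef]; simp [derivative_antider]
  have hpa : ∀ k, (p k).eval a = a ^ c := fun k => by simp [hpdef]
  -- closeness of p k to rpow on [a,b] via MVT
  have hclose : ∀ k, ∀ x ∈ Set.Icc a b, |(p k).eval x - x ^ c| ≤ (1/(k+1)) * (b - a) := by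
    intro k x hx
    have hder : ∀ y ∈ Set.Icc a b, HasDerivWithinAt
        (fun y => (p k).eval y - y ^ c) ((q k).eval y - c * y ^ (c-1)) (Set.Icc a b) y := by
      intro y hy
      have h1 : HasDerivAt (fun y => (p k).eval y) ((q k).eval y) y := by
        have h := (p k).hasDerivAt y
        rwa [hp' k] at h
      have h2 : HasDerivAt (fun y : ℝ => y ^ c) (c * y ^ (c-1)) y :=
        Real.hasDerivAt_rpow_const (Or.inl (ne_of_gt (lt_of_lt_of_le ha hy.1)))
      exact (h1.sub h2).hasDerivWithinAt
    have hbd : ∀ y ∈ Set.Icc a b, ‖(q k).eval y - c * y ^ (c-1)‖ ≤ 1/(k+1) := fun y hy =>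
      le_of_lt (hq k y hy)
    have haab : a ∈ Set.Icc a b := ⟨le_refl a, hab⟩
    have hmvt := Convex.norm_image_sub_le_of_norm_hasDerivWithin_le hder hbd
      (convex_Icc a b) haab hx
    rw [hpa k] at hmvt
    simp only [sub_self, sub_zero] at hmvt
    refine hmvt.trans ?_
    have h1 : ‖x - a‖ ≤ b - a := by
      rw [Real.norm_eq_abs, abs_of_nonneg (by linarith [hx.1])]
      linarith [hx.2]
    have h2 : (0:ℝ) ≤ 1/(k+1) := by positivity
    exact mul_le_mul_of_nonneg_left h1 h2
  -- diagonal weights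
  have hw : ∀ t : ℝ, ∀ i, |(star ((hH t).eigenvectorUnitary : Matrix (Fin n) (Fin n) ℝ) * Δ *
      ((hH t).eigenvectorUnitary : Matrix (Fin n) (Fin n) ℝ)) i i| ≤ K :=
    fun t i => quad_bound (star_mul_self_eigU (hH t)) Δ i
  -- the limit theorem
  have key := hasDerivAt_of_tendstoUniformlyOn (l := Filter.atTop (α := ℕ))
    (f := fun k (t : ℝ) => (aeval (X + t • Δ) (p k)).trace)
    (f' := fun k (t : ℝ) => (aeval (X + t • Δ) (q k) * Δ).trace)
    (g := fun t : ℝ => (mpow (X + t • Δ) c).trace)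
    (g' := fun t : ℝ => c * (mpow (X + t • Δ) (c-1) * Δ).trace)
    (isOpen_Ioo (a := -δ) (b := δ))
    ?_ ?_ ?_ (show (0:ℝ) ∈ Set.Ioo (-δ) δ from ⟨by linarith, hδ⟩)
  · have h0A : X + (0:ℝ) • Δ = X := by simp
    simpa [h0A] using key
  -- uniform convergence of derivatives
  · rw [Metric.tendstoUniformlyOn_iff]
    intro ε hε
    have hten : Filter.Tendsto (fun k : ℕ => (n * K) * (1/(k+1))) Filter.atTop (𝓝 0) := by
      have := tendsto_one_div_add_atTop_nhds_zero_nat.const_mul (n * K : ℝ)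
      simpa using this
    filter_upwards [hten.eventually_lt_const hε] with k hk
    intro t ht
    rw [Real.dist_eq]
    refine lt_of_le_of_lt ?_ hk
    rw [mpow_eq (hH t) (c-1), trace_conj_diag_mul, aeval_spec (hH t) (q k),
      trace_conj_diag_mul, Finset.mul_sum]
    rw [← Finset.sum_sub_distrib]
    refine (Finset.abs_sum_le_sum_abs _ _).trans ?_
    have hterm : ∀ i, |c * ((hH t).eigenvalues i ^ (c-1) *
          (star ((hH t).eigenvectorUnitary : Matrix (Fin n) (Fin n) ℝ) * Δ *
            ((hH t).eigenvectorUnitary : Matrix (Fin n) (Fin n) ℝ)) i i) -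
        (q k).eval ((hH t).eigenvalues i) *
          (star ((hH t).eigenvectorUnitary : Matrix (Fin n) (Fin n) ℝ) * Δ *
            ((hH t).eigenvectorUnitary : Matrix (Fin n) (Fin n) ℝ)) i i|
        ≤ (1/(k+1)) * K := by
      intro i
      rw [← mul_assoc, ← sub_mul, abs_mul]
      have h1 : |c * (hH t).eigenvalues i ^ (c-1) - (q k).eval ((hH t).eigenvalues i)|
          ≤ 1/(k+1) := by
        rw [abs_sub_comm]
        exact le_of_lt (hq k _ (hspec t ht i))
      exact mul_le_mul h1 (hw t i) (abs_nonneg _) (by positivity)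
    refine (Finset.sum_le_sum fun i _ => hterm i).trans ?_
    rw [Finset.sum_const, Finset.card_univ, Fintype.card_fin, nsmul_eq_mul]
    ring_nf
    exact le_refl _
  -- derivatives exist
  · refine Filter.Eventually.of_forall fun k => fun t _ => ?_
    have h := trace_aeval_deriv X Δ (p k) t
    rwa [hp' k] at h
  -- pointwise convergence
  · intro t ht
    rw [← tendsto_sub_nhds_zero_iff]
    apply squeeze_zero_norm (a := fun k : ℕ => (n * (b - a)) * (1/(k+1)))
    · intro k
      beta_reduce
      rw [Real.norm_eq_abs]
      rw [aeval_spec (hH t) (p k), trace_conj_diag, mpow_eq (hH t) c, trace_conj_diag,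
        ← Finset.sum_sub_distrib]
      refine (Finset.abs_sum_le_sum_abs _ _).trans ?_
      have hterm : ∀ i, |(p k).eval ((hH t).eigenvalues i) - (hH t).eigenvalues i ^ c|
          ≤ (1/(k+1)) * (b - a) := fun i => hclose k _ (hspec t ht i)
      refine (Finset.sum_le_sum fun i _ => hterm i).trans ?_
      rw [Finset.sum_const, Finset.card_univ, Fintype.card_fin, nsmul_eq_mul]
      ring_nf
      exact le_refl _
    · have := tendsto_one_div_add_atTop_nhds_zero_nat.const_mul (n * (b - a) : ℝ)
      simpa using this
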